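/- arXiv:2202.12697 — 2 statements merged into one kernel-verified Lean document; each statement's English description precedes it below -/
import Mathlib

section
/- For all parameters A, B, C ∈ ℂ with (C;q)_n ≠ 0 for all n, and all x, y ∈ ℂ with |x| < 1 and |y| < 1, the bibasic Humbert function satisfies Φ₁(A,B;C;q,q₁;x,y) = A·Φ₁(A,B;C;q,q₁;qx,qy) + (1−A)·Φ₁(qA,B;C;q,q₁;x,y). (Equation (2.7), with A playing the role of q^{a−1}.) -/
open Complex

/-- The q-shifted factorial (z;q)_n = prod_{r=0}^{n-1} (1 - z q^r). -/
noncomputable def qPoch (q z : ℂ) (n : ℕ) : ℂ :=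
  ∏ r ∈ Finset.range n, (1 - z * q ^ r)

/-- The bibasic Humbert hypergeometric function Φ₁ on two independent bases q and q₁. -/
noncomputable def Phi1 (q q1 A B C x y : ℂ) : ℂ :=
  ∑' p : ℕ × ℕ,
    qPoch q A (p.1 + p.2) * qPoch q1 B p.1 /
      (qPoch q C (p.1 + p.2) * qPoch q1 q1 p.1 * qPoch q q p.2) * x ^ p.1 * y ^ p.2

/-- The Jackson p-derivative. -/
noncomputable def jackson (p : ℂ) (f : ℂ → ℂ) (x : ℂ) : ℂ :=
  (f x - f (p * x)) / ((1 - p) * x)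

/- ### Auxiliary lemmas -/

lemma qPoch_self_ne_zero {q : ℂ} (hq : ‖q‖ < 1) (n : ℕ) : qPoch q q n ≠ 0 := by
  unfold qPoch
  rw [Finset.prod_ne_zero_iff]
  intro r _ h
  have h1 : q * q ^ r = 1 := by linear_combination -h
  have h2 := congrArg (‖·‖) h1
  rw [norm_mul, norm_one, norm_pow] at h2
  have h3 : ‖q‖ ^ r ≤ 1 := pow_le_one₀ (norm_nonneg q) hq.le
  nlinarith [norm_nonneg q, pow_nonneg (norm_nonneg q) r]

lemma aux_exp_le (t : ℝ) (h0 : 0 ≤ t) (h2 : t ≤ 1/2) : Real.exp (-(2*t)) ≤ 1 - t := by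
  have h1 : (1:ℝ) + 2*t ≤ Real.exp (2*t) := by
    have := Real.add_one_le_exp (2*t); linarith
  have hp : (0:ℝ) < 1 + 2*t := by linarith
  rw [Real.exp_neg]
  have h3 : (Real.exp (2*t))⁻¹ ≤ (1+2*t)⁻¹ := inv_anti₀ hp h1
  have h4 : (1+2*t)⁻¹ ≤ 1 - t := by
    rw [inv_le_iff_one_le_mul₀ hp]
    nlinarith
  linarith

lemma geom_partial_le {c : ℝ} (hc0 : 0 ≤ c) (hc1 : c < 1) (n : ℕ) :
    ∑ r ∈ Finset.range n, c ^ r ≤ (1 - c)⁻¹ := by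
  have hs := summable_geometric_of_lt_one hc0 hc1
  have := Summable.sum_le_tsum (Finset.range n) (fun i _ => pow_nonneg hc0 i) hs
  rwa [tsum_geometric_of_lt_one hc0 hc1] at this

/-- Uniform upper bound for the q-Pochhammer symbols. -/
lemma qPoch_abs_le {q : ℂ} (hq : ‖q‖ < 1) (A : ℂ) (n : ℕ) :
    ‖qPoch q A n‖ ≤ Real.exp (‖A‖ * (1 - ‖q‖)⁻¹) := by
  unfold qPoch
  rw [norm_prod]
  calc ∏ r ∈ Finset.range n, ‖1 - A * q ^ r‖
      ≤ ∏ r ∈ Finset.range n, Real.exp (‖A‖ * ‖q‖ ^ r) := by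
        apply Finset.prod_le_prod (fun _ _ => norm_nonneg _)
        intro r _
        have h1 : ‖1 - A * q ^ r‖ ≤ 1 + ‖A‖ * ‖q‖ ^ r := by
          have := norm_sub_le (1:ℂ) (A * q ^ r)
          simpa [norm_mul, norm_pow] using this
        have h2 := Real.add_one_le_exp (‖A‖ * ‖q‖ ^ r)
        linarith
    _ = Real.exp (∑ r ∈ Finset.range n, ‖A‖ * ‖q‖ ^ r) :=
        (Real.exp_sum _ _).symm
    _ ≤ Real.exp (‖A‖ * (1 - ‖q‖)⁻¹) := by
        apply Real.exp_le_exp.mpr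
        rw [← Finset.mul_sum]
        have := geom_partial_le (norm_nonneg q) hq n
        have hA := norm_nonneg A
        nlinarith

/-- Uniform positive lower bound for the q-Pochhammer symbols, given they never vanish. -/
lemma qPoch_abs_lower {q C : ℂ} (hq : ‖q‖ < 1) (hC : ∀ n, qPoch q C n ≠ 0) :
    ∃ ε > 0, ∀ n, ε ≤ ‖qPoch q C n‖ := by
  have hq0 := norm_nonneg q
  have htend : Filter.Tendsto (fun r : ℕ => ‖C‖ * ‖q‖ ^ r)
      Filter.atTop (nhds 0) := by
    have := tendsto_pow_atTop_nhds_zero_of_lt_one hq0 hq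
    simpa using this.const_mul (‖C‖)
  obtain ⟨N, hN⟩ := Filter.eventually_atTop.mp
    (htend.eventually_le_const (by norm_num : (0:ℝ) < 1/2))
  set E : ℝ := Real.exp (-(2 * (‖C‖ * (1 - ‖q‖)⁻¹))) with hE
  have hEpos : 0 < E := Real.exp_pos _
  -- tail bound
  have tail : ∀ m : ℕ, E ≤ ‖∏ r ∈ Finset.range m, (1 - C * q ^ (N + r))‖ := by
    intro m
    rw [norm_prod]
    have hfac : ∀ r ∈ Finset.range m,
        Real.exp (-(2 * (‖C‖ * ‖q‖ ^ (N + r))))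
          ≤ ‖1 - C * q ^ (N + r)‖ := by
      intro r _
      have ht0 : 0 ≤ ‖C‖ * ‖q‖ ^ (N + r) := by positivity
      have ht2 : ‖C‖ * ‖q‖ ^ (N + r) ≤ 1/2 :=
        hN (N + r) (Nat.le_add_right N r)
      have h1 := aux_exp_le _ ht0 ht2
      have h2 : 1 - ‖C * q ^ (N + r)‖ ≤ ‖1 - C * q ^ (N + r)‖ := by
        have := norm_sub_norm_le (1:ℂ) (C * q ^ (N + r))
        simpa using this
      rw [norm_mul, norm_pow] at h2
      linarith
    calc E ≤ ∏ r ∈ Finset.range m,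
          Real.exp (-(2 * (‖C‖ * ‖q‖ ^ (N + r)))) := by
          rw [← Real.exp_sum]
          apply Real.exp_le_exp.mpr
          have key : ∑ r ∈ Finset.range m, ‖C‖ * ‖q‖ ^ (N + r)
              ≤ ‖C‖ * (1 - ‖q‖)⁻¹ := by
            have h1 : ∀ r, ‖C‖ * ‖q‖ ^ (N + r)
                = (‖C‖ * ‖q‖ ^ N) * ‖q‖ ^ r := by
              intro r; rw [pow_add]; ring
            simp_rw [h1]
            rw [← Finset.mul_sum]
            have h2 := geom_partial_le hq0 hq m
            have h3 : ‖q‖ ^ N ≤ 1 := pow_le_one₀ hq0 hq.le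
            have h4 : (0:ℝ) ≤ ∑ r ∈ Finset.range m, ‖q‖ ^ r :=
              Finset.sum_nonneg (fun i _ => pow_nonneg hq0 i)
            have h5 : (0:ℝ) < (1 - ‖q‖)⁻¹ := by
              apply inv_pos.mpr; linarith
            have s1 : ‖C‖ * ‖q‖ ^ N * ∑ r ∈ Finset.range m, ‖q‖ ^ r
                ≤ ‖C‖ * ‖q‖ ^ N * (1 - ‖q‖)⁻¹ :=
              mul_le_mul_of_nonneg_left h2 (by positivity)
            have s2 : ‖C‖ * ‖q‖ ^ N * (1 - ‖q‖)⁻¹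
                ≤ ‖C‖ * (1 - ‖q‖)⁻¹ := by
              apply mul_le_mul_of_nonneg_right _ h5.le
              nlinarith [norm_nonneg C]
            linarith
          have : ∑ r ∈ Finset.range m, -(2 * (‖C‖ * ‖q‖ ^ (N + r)))
              = -(2 * ∑ r ∈ Finset.range m, ‖C‖ * ‖q‖ ^ (N + r)) := by
            rw [Finset.mul_sum, ← Finset.sum_neg_distrib]
          rw [this]
          linarith
      _ ≤ ∏ r ∈ Finset.range m, ‖1 - C * q ^ (N + r)‖ :=
          Finset.prod_le_prod (fun _ _ => (Real.exp_pos _).le) hfac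
  -- finite part
  set εfin : ℝ := (Finset.range (N+1)).inf' ⟨0, by simp⟩ (fun n => ‖qPoch q C n‖)
    with hεfin
  have hεfinpos : 0 < εfin := by
    rw [hεfin]
    refine (Finset.lt_inf'_iff _).mpr ?_
    intro n _
    exact norm_pos_iff.mpr (hC n)
  refine ⟨min εfin (‖qPoch q C N‖ * E), ?_, ?_⟩
  · exact lt_min hεfinpos (mul_pos (norm_pos_iff.mpr (hC N)) hEpos)
  · intro n
    rcases le_or_gt n N with hn | hn
    · refine le_trans (min_le_left _ _) ?_
      exact Finset.inf'_le _ (Finset.mem_range.mpr (Nat.lt_succ_of_le hn))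
    · refine le_trans (min_le_right _ _) ?_
      obtain ⟨m, rfl⟩ : ∃ m, n = N + m := ⟨n - N, by omega⟩
      have hsplit : qPoch q C (N + m)
          = qPoch q C N * ∏ r ∈ Finset.range m, (1 - C * q ^ (N + r)) := by
        unfold qPoch
        rw [Finset.prod_range_add]
      rw [hsplit, norm_mul]
      exact mul_le_mul_of_nonneg_left (tail m) (norm_nonneg _)

/-- Summability of the Φ₁ double series. -/
lemma phi1_summable {q q1 C : ℂ} (hq : ‖q‖ < 1) (hq1 : ‖q1‖ < 1)
    (hC : ∀ n, qPoch q C n ≠ 0) (A B x y : ℂ)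
    (hx : ‖x‖ < 1) (hy : ‖y‖ < 1) :
    Summable (fun p : ℕ × ℕ => qPoch q A (p.1 + p.2) * qPoch q1 B p.1 /
      (qPoch q C (p.1 + p.2) * qPoch q1 q1 p.1 * qPoch q q p.2) * x ^ p.1 * y ^ p.2) := by
  obtain ⟨εC, hεC, hCl⟩ := qPoch_abs_lower hq hC
  obtain ⟨ε1, hε1, h1l⟩ := qPoch_abs_lower hq1 (qPoch_self_ne_zero hq1)
  obtain ⟨εq, hεq, hql⟩ := qPoch_abs_lower hq (qPoch_self_ne_zero hq)
  set MA := Real.exp (‖A‖ * (1 - ‖q‖)⁻¹) with hMA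
  set MB := Real.exp (‖B‖ * (1 - ‖q1‖)⁻¹) with hMB
  set K := MA * MB / (εC * ε1 * εq) with hK
  have hKpos : 0 < K := by
    apply div_pos (mul_pos (Real.exp_pos _) (Real.exp_pos _))
    positivity
  apply Summable.of_norm_bounded
    (g := fun p : ℕ × ℕ => K * (‖x‖ ^ p.1 * ‖y‖ ^ p.2))
  · apply Summable.mul_left
    exact Summable.mul_of_nonneg
      (summable_geometric_of_lt_one (norm_nonneg x) hx)
      (summable_geometric_of_lt_one (norm_nonneg y) hy)
      (fun i => pow_nonneg (norm_nonneg x) i)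
      (fun i => pow_nonneg (norm_nonneg y) i)
  · rintro ⟨l, k⟩
    simp only [norm_mul, norm_div, norm_pow]
    have hu1 := qPoch_abs_le hq A (l + k)
    have hu2 := qPoch_abs_le hq1 B l
    have hd1 := hCl (l + k)
    have hd2 := h1l l
    have hd3 := hql k
    have hden : εC * ε1 * εq ≤
        ‖qPoch q C (l + k)‖ * ‖qPoch q1 q1 l‖
          * ‖qPoch q q k‖ := by
      apply mul_le_mul (mul_le_mul hd1 hd2 hε1.le (norm_nonneg _)) hd3 hεq.le
      positivity
    have hnum : ‖qPoch q A (l + k)‖ * ‖qPoch q1 B l‖ ≤ MA * MB :=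
      mul_le_mul hu1 hu2 (norm_nonneg _) (Real.exp_pos _).le
    have hfrac : ‖qPoch q A (l + k)‖ * ‖qPoch q1 B l‖ /
        (‖qPoch q C (l + k)‖ * ‖qPoch q1 q1 l‖
          * ‖qPoch q q k‖) ≤ K := by
      rw [hK]
      apply div_le_div₀ (by positivity) hnum (by positivity) hden
    have hxy : (0:ℝ) ≤ ‖x‖ ^ l * ‖y‖ ^ k := by positivity
    calc ‖qPoch q A (l + k)‖ * ‖qPoch q1 B l‖ /
          (‖qPoch q C (l + k)‖ * ‖qPoch q1 q1 l‖
            * ‖qPoch q q k‖) * ‖x‖ ^ l * ‖y‖ ^ k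
        ≤ K * (‖x‖ ^ l * ‖y‖ ^ k) := by
          rw [mul_assoc]
          exact mul_le_mul_of_nonneg_right hfrac hxy
      _ = K * (‖x‖ ^ l * ‖y‖ ^ k) := rfl

lemma qPoch_shift (q A : ℂ) (n : ℕ) :
    (1 - A) * qPoch q (q * A) n = qPoch q A n * (1 - A * q ^ n) := by
  have h1 : (1 - A) * qPoch q (q * A) n = qPoch q A (n + 1) := by
    unfold qPoch
    rw [Finset.prod_range_succ']
    simp only [pow_zero, mul_one]
    rw [mul_comm]
    congr 1
    apply Finset.prod_congr rfl
    intro r _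
    rw [pow_succ']
    ring
  have h2 : qPoch q A (n + 1) = qPoch q A n * (1 - A * q ^ n) := by
    unfold qPoch
    rw [Finset.prod_range_succ]
  rw [h1, h2]

theorem stmt6 (q q1 A B C x y : ℂ)
    (hq0 : 0 < ‖q‖) (hq1 : ‖q‖ < 1)
    (hq10 : 0 < ‖q1‖) (hq11 : ‖q1‖ < 1)
    (hC : ∀ n : ℕ, qPoch q C n ≠ 0)
    (hx : ‖x‖ < 1) (hy : ‖y‖ < 1) :
    Phi1 q q1 A B C x y =
      A * Phi1 q q1 A B C (q * x) (q * y)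
        + (1 - A) * Phi1 q q1 (q * A) B C x y := by
  have hqx : ‖q * x‖ < 1 := by
    rw [norm_mul]
    nlinarith [norm_nonneg q, norm_nonneg x]
  have hqy : ‖q * y‖ < 1 := by
    rw [norm_mul]
    nlinarith [norm_nonneg q, norm_nonneg y]
  have hs1 := phi1_summable hq1 hq11 hC A B (q * x) (q * y) hqx hqy
  have hs2 := phi1_summable hq1 hq11 hC (q * A) B x y hx hy
  unfold Phi1
  rw [← tsum_mul_left, ← tsum_mul_left, ← Summable.tsum_add (hs1.mul_left A) (hs2.mul_left (1 - A))]
  apply tsum_congr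
  rintro ⟨l, k⟩
  simp only
  have hsh := qPoch_shift q A (l + k)
  have hpw : (q * x) ^ l * (q * y) ^ k = q ^ (l + k) * (x ^ l * y ^ k) := by
    rw [mul_pow, mul_pow, pow_add]; ring
  set D := qPoch q C (l + k) * qPoch q1 q1 l * qPoch q q k with hD
  linear_combination (-(qPoch q1 B l / D * x ^ l * y ^ k)) * hsh
    + (-(A * qPoch q A (l + k) * qPoch q1 B l / D)) * hpw
end

section
/- For all parameters A, B, C ∈ ℂ with (C;q)_n ≠ 0 for all n, all s ∈ ℕ, all x ∈ ℂ with |x| < 1, and all y ∈ ℂ with 0 < |y| < 1, the s-fold iterated Jackson q-derivative in the variable y of the function y ↦ Φ₁(A,B;C;q,q₁;x,y), evaluated at y, equals [(A;q)_s / ((1−q)^s (C;q)_s)] · Φ₁(q^s A, B; q^s C; q,q₁; x, y). (Equation (2.15).) -/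
open Complex

open Complex


lemma one_sub_ne_zero_of_abs_lt {u : ℂ} (h : ‖u‖ < 1) : (1 : ℂ) - u ≠ 0 := by
  intro h0
  have : u = 1 := by linear_combination -h0
  simp [this] at h

lemma qPoch_ne_zero_self {p : ℂ} (hp : ‖p‖ < 1) (n : ℕ) : qPoch p p n ≠ 0 := by
  rw [qPoch, Finset.prod_ne_zero_iff]
  intro r _
  apply one_sub_ne_zero_of_abs_lt
  rw [norm_mul, norm_pow]
  calc ‖p‖ * ‖p‖ ^ r ≤ ‖p‖ * 1 := by
        apply mul_le_mul_of_nonneg_left _ (norm_nonneg _)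
        exact pow_le_one₀ (norm_nonneg _) hp.le
    _ < 1 := by simpa using hp

lemma qPoch_succ (p z : ℂ) (n : ℕ) : qPoch p z (n + 1) = (1 - z) * qPoch p (p * z) n := by
  rw [qPoch, qPoch, Finset.prod_range_succ']
  simp only [pow_zero, mul_one]
  rw [mul_comm]
  congr 1
  apply Finset.prod_congr rfl
  intro r _
  ring

lemma qPoch_add (p z : ℂ) (a b : ℕ) :
    qPoch p z (a + b) = qPoch p z a * qPoch p (z * p ^ a) b := by
  rw [qPoch, qPoch, qPoch, Finset.prod_range_add]
  congr 1
  apply Finset.prod_congr rfl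
  intro r _
  rw [pow_add]
  ring

lemma qPoch_abs_le_s13 (p z : ℂ) (hp : ‖p‖ < 1) (n : ℕ) :
    ‖qPoch p z n‖ ≤ Real.exp (‖z‖ / (1 - ‖p‖)) := by
  have h0 : 0 ≤ ‖p‖ := norm_nonneg _
  rw [qPoch, norm_prod]
  calc ∏ r ∈ Finset.range n, ‖1 - z * p ^ r‖
      ≤ ∏ r ∈ Finset.range n, Real.exp (‖z‖ * ‖p‖ ^ r) := by
        apply Finset.prod_le_prod (fun _ _ => norm_nonneg _)
        intro r _
        calc ‖1 - z * p ^ r‖ ≤ ‖(1:ℂ)‖ + ‖z * p ^ r‖ := by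
              simpa using norm_sub_le (1:ℂ) (z * p ^ r)
          _ = ‖z‖ * ‖p‖ ^ r + 1 := by
              simp [norm_mul, norm_pow]; ring
          _ ≤ Real.exp (‖z‖ * ‖p‖ ^ r) := Real.add_one_le_exp _
    _ = Real.exp (∑ r ∈ Finset.range n, ‖z‖ * ‖p‖ ^ r) := (Real.exp_sum _ _).symm
    _ ≤ Real.exp (‖z‖ / (1 - ‖p‖)) := by
        apply Real.exp_le_exp.2
        rw [← Finset.mul_sum]
        have hsum : ∑ r ∈ Finset.range n, ‖p‖ ^ r ≤ (1 - ‖p‖)⁻¹ := by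
          rw [← tsum_geometric_of_lt_one h0 hp]
          exact Summable.sum_le_tsum _ (fun i _ => pow_nonneg h0 i) (summable_geometric_of_lt_one h0 hp)
        rw [div_eq_mul_inv]
        exact mul_le_mul_of_nonneg_left hsum (norm_nonneg _)

lemma prod_one_sub_ge (a : ℕ → ℝ) (ha : ∀ r, 0 ≤ a r) :
    ∀ n, (∑ r ∈ Finset.range n, a r) ≤ 1 →
      1 - ∑ r ∈ Finset.range n, a r ≤ ∏ r ∈ Finset.range n, (1 - a r) := by
  intro n
  induction n with
  | zero => simp
  | succ n ih =>
    intro h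
    rw [Finset.sum_range_succ] at h ⊢
    rw [Finset.prod_range_succ]
    have hS : 0 ≤ ∑ r ∈ Finset.range n, a r := Finset.sum_nonneg (fun i _ => ha i)
    have hSn : ∑ r ∈ Finset.range n, a r ≤ 1 := by linarith [ha n]
    have h1 := ih hSn
    have han : a n ≤ 1 := by linarith
    nlinarith [ha n, mul_le_mul_of_nonneg_right h1 (by linarith : (0:ℝ) ≤ 1 - a n)]

lemma qPoch_abs_half (p w : ℂ) (hp : ‖p‖ < 1)
    (hw : ‖w‖ / (1 - ‖p‖) ≤ 1 / 2) (m : ℕ) :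
    1 / 2 ≤ ‖qPoch p w m‖ := by
  have h0 : 0 ≤ ‖p‖ := norm_nonneg _
  have hpp : 0 < 1 - ‖p‖ := by linarith
  have hw0 : 0 ≤ ‖w‖ := norm_nonneg _
  have hw2 : ‖w‖ ≤ (1 - ‖p‖) / 2 := by
    rw [div_le_div_iff₀ hpp (by norm_num)] at hw; linarith
  have hsum : ∑ r ∈ Finset.range m, ‖w‖ * ‖p‖ ^ r ≤ 1 / 2 := by
    rw [← Finset.mul_sum]
    have hgeom : ∑ r ∈ Finset.range m, ‖p‖ ^ r ≤ (1 - ‖p‖)⁻¹ := by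
      rw [← tsum_geometric_of_lt_one h0 hp]
      exact Summable.sum_le_tsum _ (fun i _ => pow_nonneg h0 i) (summable_geometric_of_lt_one h0 hp)
    calc ‖w‖ * ∑ r ∈ Finset.range m, ‖p‖ ^ r
        ≤ ‖w‖ * (1 - ‖p‖)⁻¹ := mul_le_mul_of_nonneg_left hgeom hw0
      _ = ‖w‖ / (1 - ‖p‖) := by rw [div_eq_mul_inv]
      _ ≤ 1 / 2 := hw
  have ha : ∀ r : ℕ, 0 ≤ ‖w‖ * ‖p‖ ^ r :=
    fun r => mul_nonneg hw0 (pow_nonneg h0 r)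
  have har : ∀ r : ℕ, ‖w‖ * ‖p‖ ^ r ≤ 1 / 2 := by
    intro r
    calc ‖w‖ * ‖p‖ ^ r ≤ ‖w‖ * 1 :=
          mul_le_mul_of_nonneg_left (pow_le_one₀ h0 hp.le) hw0
      _ ≤ 1 / 2 := by linarith
  rw [qPoch, norm_prod]
  calc (1:ℝ) / 2 ≤ 1 - ∑ r ∈ Finset.range m, ‖w‖ * ‖p‖ ^ r := by linarith
    _ ≤ ∏ r ∈ Finset.range m, (1 - ‖w‖ * ‖p‖ ^ r) :=
        prod_one_sub_ge _ ha m (by linarith)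
    _ ≤ ∏ r ∈ Finset.range m, ‖1 - w * p ^ r‖ := by
        apply Finset.prod_le_prod
        · intro r _; linarith [har r]
        · intro r _
          calc 1 - ‖w‖ * ‖p‖ ^ r
              = ‖(1:ℂ)‖ - ‖w * p ^ r‖ := by simp [norm_mul, norm_pow]
            _ ≤ ‖1 - w * p ^ r‖ := by
              simpa using norm_sub_norm_le (1:ℂ) (w * p ^ r)

lemma qPoch_abs_lower_s13 (p z : ℂ) (hp : ‖p‖ < 1) (hz : ∀ n, qPoch p z n ≠ 0) :
    ∃ m, 0 < m ∧ ∀ n, m ≤ ‖qPoch p z n‖ := by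
  have h0 : 0 ≤ ‖p‖ := norm_nonneg _
  have hpp : 0 < 1 - ‖p‖ := by linarith
  have hz0 : 0 ≤ ‖z‖ := norm_nonneg _
  have hε : 0 < (1 - ‖p‖) / (2 * (‖z‖ + 1)) := by positivity
  obtain ⟨R, hR⟩ := ((tendsto_pow_atTop_nhds_zero_of_lt_one h0 hp).eventually
    (gt_mem_nhds hε)).exists
  have hRb : ‖z * p ^ R‖ / (1 - ‖p‖) ≤ 1 / 2 := by
    rw [norm_mul, norm_pow, div_le_div_iff₀ hpp (by norm_num)]
    have hpR : 0 ≤ ‖p‖ ^ R := pow_nonneg h0 R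
    rw [lt_div_iff₀ (by positivity)] at hR
    nlinarith
  set m0 := (Finset.range (R + 1)).inf' ⟨0, by simp⟩ (fun n => ‖qPoch p z n‖) with hm0def
  have hm0 : 0 < m0 :=
    (Finset.lt_inf'_iff _).2 (fun i _ => norm_pos_iff.mpr (hz i))
  refine ⟨m0 / 2, by positivity, fun n => ?_⟩
  rcases le_or_gt n R with h | h
  · have : m0 ≤ ‖qPoch p z n‖ :=
      Finset.inf'_le _ (Finset.mem_range.2 (by omega))
    linarith
  · obtain ⟨m, rfl⟩ : ∃ m, n = R + m := ⟨n - R, by omega⟩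
    rw [qPoch_add, norm_mul]
    have h1 : m0 ≤ ‖qPoch p z R‖ :=
      Finset.inf'_le _ (Finset.mem_range.2 (by omega))
    have h2 : 1 / 2 ≤ ‖qPoch p (z * p ^ R) m‖ := qPoch_abs_half p _ hp hRb m
    calc m0 / 2 = m0 * (1 / 2) := by ring
      _ ≤ ‖qPoch p z R‖ * ‖qPoch p (z * p ^ R) m‖ :=
          mul_le_mul h1 h2 (by norm_num) (norm_nonneg _)



lemma summable_phi (q q1 A B C x y : ℂ)
    (hq1 : ‖q‖ < 1) (hq11 : ‖q1‖ < 1)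
    (hC : ∀ n : ℕ, qPoch q C n ≠ 0) (hx : ‖x‖ < 1) (hy : ‖y‖ < 1) :
    Summable (fun p : ℕ × ℕ =>
      qPoch q A (p.1 + p.2) * qPoch q1 B p.1 /
        (qPoch q C (p.1 + p.2) * qPoch q1 q1 p.1 * qPoch q q p.2) * x ^ p.1 * y ^ p.2) := by
  obtain ⟨mC, hmC, hmCle⟩ := qPoch_abs_lower_s13 q C hq1 hC
  obtain ⟨m1, hm1, hm1le⟩ := qPoch_abs_lower_s13 q1 q1 hq11 (qPoch_ne_zero_self hq11)
  obtain ⟨mq, hmq, hmqle⟩ := qPoch_abs_lower_s13 q q hq1 (qPoch_ne_zero_self hq1)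
  set MA := Real.exp (‖A‖ / (1 - ‖q‖)) with hMA
  set MB := Real.exp (‖B‖ / (1 - ‖q1‖)) with hMB
  have hMA0 : 0 < MA := Real.exp_pos _
  have hMB0 : 0 < MB := Real.exp_pos _
  apply Summable.of_norm
  apply Summable.of_nonneg_of_le (g := fun p : ℕ × ℕ => ‖_‖) (fun _ => norm_nonneg _)
    (f := fun p : ℕ × ℕ => MA * MB / (mC * m1 * mq) * (‖x‖ ^ p.1 * ‖y‖ ^ p.2))
  · intro p
    have key : ‖qPoch q A (p.1 + p.2) * qPoch q1 B p.1 /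
        (qPoch q C (p.1 + p.2) * qPoch q1 q1 p.1 * qPoch q q p.2) * x ^ p.1 * y ^ p.2‖
        = ‖qPoch q A (p.1 + p.2)‖ * ‖qPoch q1 B p.1‖ /
          (‖qPoch q C (p.1 + p.2)‖ * ‖qPoch q1 q1 p.1‖ *
            ‖qPoch q q p.2‖) * (‖x‖ ^ p.1 * ‖y‖ ^ p.2) := by
      simp [norm_mul, norm_div, norm_pow]
      ring
    rw [key]
    have hnum : ‖qPoch q A (p.1 + p.2)‖ * ‖qPoch q1 B p.1‖ ≤ MA * MB :=
      mul_le_mul (qPoch_abs_le_s13 q A hq1 _) (qPoch_abs_le_s13 q1 B hq11 _)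
        (norm_nonneg _) hMA0.le
    have hden : mC * m1 * mq ≤ ‖qPoch q C (p.1 + p.2)‖ *
        ‖qPoch q1 q1 p.1‖ * ‖qPoch q q p.2‖ := by
      apply mul_le_mul (mul_le_mul (hmCle _) (hm1le _) hm1.le (norm_nonneg _))
        (hmqle _) hmq.le
      positivity
    have hdiv : ‖qPoch q A (p.1 + p.2)‖ * ‖qPoch q1 B p.1‖ /
        (‖qPoch q C (p.1 + p.2)‖ * ‖qPoch q1 q1 p.1‖ *
          ‖qPoch q q p.2‖) ≤ MA * MB / (mC * m1 * mq) :=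
      div_le_div₀ (by positivity) hnum (by positivity) hden
    exact mul_le_mul_of_nonneg_right hdiv (by positivity)
  · apply Summable.mul_left
    exact Summable.mul_of_nonneg
      (summable_geometric_of_lt_one (norm_nonneg _) hx)
      (summable_geometric_of_lt_one (norm_nonneg _) hy)
      (fun n => pow_nonneg (norm_nonneg _) n)
      (fun n => pow_nonneg (norm_nonneg _) n)

lemma term_alg (P Q b c1 cq X w y q t A C : ℂ)
    (hq : (1:ℂ) - q ≠ 0) (hC : (1:ℂ) - C ≠ 0) (hQ : Q ≠ 0) (hc1 : c1 ≠ 0)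
    (hcq : cq ≠ 0) (ht : (1:ℂ) - q * t ≠ 0) (hy : y ≠ 0) :
    ((1 - A) * P * b / ((1 - C) * Q * c1 * (cq * (1 - q * t))) * X * (w * y) -
      (1 - A) * P * b / ((1 - C) * Q * c1 * (cq * (1 - q * t))) * X * (t * q * (w * y))) /
        ((1 - q) * y) =
      (1 - A) / ((1 - q) * (1 - C)) * (P * b / (Q * c1 * cq) * X * w) := by
  have hD1 : ((1 - C) * Q * c1 * (cq * (1 - q * t))) * ((1 - q) * y) ≠ 0 := by
    apply mul_ne_zero (mul_ne_zero (mul_ne_zero (mul_ne_zero hC hQ) hc1)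
      (mul_ne_zero hcq ht)) (mul_ne_zero hq hy)
  have hD2 : ((1 - q) * (1 - C)) * (Q * c1 * cq) ≠ 0 :=
    mul_ne_zero (mul_ne_zero hq hC) (mul_ne_zero (mul_ne_zero hQ hc1) hcq)
  have h1 : (1 - A) * P * b / ((1 - C) * Q * c1 * (cq * (1 - q * t))) * X * (w * y) -
      (1 - A) * P * b / ((1 - C) * Q * c1 * (cq * (1 - q * t))) * X * (t * q * (w * y)) =
      ((1 - A) * P * b * X * (w * y) * (1 - q * t)) /
        ((1 - C) * Q * c1 * (cq * (1 - q * t))) := by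
    simp only [div_mul_eq_mul_div]
    rw [div_sub_div_same]
    congr 1
    ring
  have h2 : (1 - A) / ((1 - q) * (1 - C)) * (P * b / (Q * c1 * cq) * X * w) =
      ((1 - A) * (P * b * X * w)) / (((1 - q) * (1 - C)) * (Q * c1 * cq)) := by
    simp only [div_mul_eq_mul_div]
    rw [mul_div_assoc', div_div, mul_comm (Q * c1 * cq) ((1 - q) * (1 - C))]
  rw [h1, div_div, h2, div_eq_div_iff hD1 hD2]
  ring

lemma step (q q1 A B C x y : ℂ)
    (hq1 : ‖q‖ < 1) (hq11 : ‖q1‖ < 1)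
    (hC : ∀ n : ℕ, qPoch q C n ≠ 0)
    (hx : ‖x‖ < 1) (hy0 : 0 < ‖y‖) (hy : ‖y‖ < 1) :
    jackson q (fun u => Phi1 q q1 A B C x u) y =
      (1 - A) / ((1 - q) * (1 - C)) * Phi1 q q1 (q * A) B (q * C) x y := by
  have hyne : y ≠ 0 := by
    intro h; simp [h] at hy0
  have hqne : (1 : ℂ) - q ≠ 0 := one_sub_ne_zero_of_abs_lt hq1
  have hCne : (1 : ℂ) - C ≠ 0 := by
    have := hC 1
    simpa [qPoch] using this
  have hqy : ‖q * y‖ < 1 := by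
    rw [norm_mul]
    calc ‖q‖ * ‖y‖ ≤ 1 * ‖y‖ := by
          apply mul_le_mul_of_nonneg_right hq1.le (norm_nonneg _)
      _ < 1 := by simpa using hy
  have hf := summable_phi q q1 A B C x y hq1 hq11 hC hx hy
  have hg := summable_phi q q1 A B C x (q * y) hq1 hq11 hC hx hqy
  rw [jackson, Phi1, Phi1, ← hf.tsum_sub hg, ← tsum_div_const, Phi1, ← tsum_mul_left]
  -- reindex LHS via (l, k) ↦ (l, k + 1)
  have hinj : Function.Injective (fun p : ℕ × ℕ => (p.1, p.2 + 1)) := by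
    intro a b h
    simp only [Prod.mk.injEq] at h
    exact Prod.ext h.1 (by omega)
  rw [← hinj.tsum_eq (f := fun p : ℕ × ℕ =>
      (qPoch q A (p.1 + p.2) * qPoch q1 B p.1 /
          (qPoch q C (p.1 + p.2) * qPoch q1 q1 p.1 * qPoch q q p.2) * x ^ p.1 * y ^ p.2 -
        qPoch q A (p.1 + p.2) * qPoch q1 B p.1 /
          (qPoch q C (p.1 + p.2) * qPoch q1 q1 p.1 * qPoch q q p.2) * x ^ p.1 * (q * y) ^ p.2) /
        ((1 - q) * y)) ?_]
  · apply tsum_congr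
    rintro ⟨l, k⟩
    simp only
    have e1 : l + (k + 1) = (l + k) + 1 := by omega
    rw [e1, qPoch_succ q A (l + k), qPoch_succ q C (l + k)]
    have e2 : qPoch q q (k + 1) = qPoch q q k * (1 - q * q ^ k) := by
      rw [qPoch, Finset.prod_range_succ, ← qPoch]
    rw [e2]
    have hqk : (1 : ℂ) - q * q ^ k ≠ 0 := by
      apply one_sub_ne_zero_of_abs_lt
      rw [norm_mul, norm_pow]
      calc ‖q‖ * ‖q‖ ^ k ≤ ‖q‖ * 1 := by
            apply mul_le_mul_of_nonneg_left _ (norm_nonneg _)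
            exact pow_le_one₀ (norm_nonneg _) hq1.le
        _ < 1 := by simpa using hq1
    have hQC : qPoch q (q * C) (l + k) ≠ 0 := by
      have := hC ((l + k) + 1)
      rw [qPoch_succ] at this
      exact fun h => this (by rw [h, mul_zero])
    have h1 : qPoch q1 q1 l ≠ 0 := qPoch_ne_zero_self hq11 l
    have hqq : qPoch q q k ≠ 0 := qPoch_ne_zero_self hq1 k
    rw [mul_pow q y (k+1), pow_succ q k, pow_succ y k]
    exact term_alg (qPoch q (q*A) (l+k)) (qPoch q (q*C) (l+k)) (qPoch q1 B l)
      (qPoch q1 q1 l) (qPoch q q k) (x^l) (y^k) y q (q^k) A C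
      hqne hCne hQC h1 hqq hqk hyne
  · rintro ⟨l, k⟩ hp
    rcases Nat.eq_zero_or_pos k with rfl | hk
    · exfalso
      apply hp
      simp
    · exact ⟨(l, k - 1), by simp; omega⟩

theorem stmt13 (q q1 A B C x y : ℂ)
    (hq0 : 0 < ‖q‖) (hq1 : ‖q‖ < 1)
    (hq10 : 0 < ‖q1‖) (hq11 : ‖q1‖ < 1)
    (hC : ∀ n : ℕ, qPoch q C n ≠ 0)
    (s : ℕ) (hx : ‖x‖ < 1) (hy0 : 0 < ‖y‖) (hy : ‖y‖ < 1) :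
    ((jackson q)^[s] (fun u => Phi1 q q1 A B C x u)) y =
      qPoch q A s / ((1 - q) ^ s * qPoch q C s) *
        Phi1 q q1 (q ^ s * A) B (q ^ s * C) x y := by
  induction s generalizing y with
  | zero =>
    simp [qPoch]
  | succ s ih =>
    have hqy0 : 0 < ‖q * y‖ := by rw [norm_mul]; exact mul_pos hq0 hy0
    have hqy1 : ‖q * y‖ < 1 := by
      rw [norm_mul]
      calc ‖q‖ * ‖y‖ ≤ 1 * ‖y‖ :=
            mul_le_mul_of_nonneg_right hq1.le (norm_nonneg _)
        _ < 1 := by simpa using hy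
    have hC' : ∀ n : ℕ, qPoch q (q ^ s * C) n ≠ 0 := by
      intro n
      have h := hC (s + n)
      rw [qPoch_add] at h
      rw [mul_comm (q ^ s) C]
      exact fun h0 => h (by rw [h0, mul_zero])
    have hstep := step q q1 (q ^ s * A) B (q ^ s * C) x y hq1 hq11 hC' hx hy0 hy
    rw [Function.iterate_succ_apply', jackson, ih y hy0 hy, ih (q * y) hqy0 hqy1]
    have hcoef : (((qPoch q A s / ((1 - q) ^ s * qPoch q C s)) *
          Phi1 q q1 (q ^ s * A) B (q ^ s * C) x y) -
        ((qPoch q A s / ((1 - q) ^ s * qPoch q C s)) *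
          Phi1 q q1 (q ^ s * A) B (q ^ s * C) x (q * y))) / ((1 - q) * y) =
        (qPoch q A s / ((1 - q) ^ s * qPoch q C s)) *
          (((fun u => Phi1 q q1 (q ^ s * A) B (q ^ s * C) x u) y -
            (fun u => Phi1 q q1 (q ^ s * A) B (q ^ s * C) x u) (q * y)) / ((1 - q) * y)) := by
      simp only
      rw [← mul_sub, mul_div_assoc]
    rw [hcoef, ← jackson, hstep]
    have hqne : (1 : ℂ) - q ≠ 0 := one_sub_ne_zero_of_abs_lt hq1
    have hCs : qPoch q C s ≠ 0 := hC s
    have hCf : (1 : ℂ) - C * q ^ s ≠ 0 := by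
      have h := hC (s + 1)
      rw [qPoch_add] at h
      have : qPoch q (C * q ^ s) 1 ≠ 0 := fun h0 => h (by rw [h0, mul_zero])
      simpa [qPoch] using this
    have e3 : qPoch q A (s + 1) = qPoch q A s * (1 - A * q ^ s) := by
      rw [qPoch, Finset.prod_range_succ, ← qPoch]
    have e4 : qPoch q C (s + 1) = qPoch q C s * (1 - C * q ^ s) := by
      rw [qPoch, Finset.prod_range_succ, ← qPoch]
    have e5 : q * (q ^ s * A) = q ^ (s + 1) * A := by ring
    have e6 : q * (q ^ s * C) = q ^ (s + 1) * C := by ring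
    rw [e5, e6, e3, e4, ← mul_assoc]
    congr 1
    have h1q : ((1 : ℂ) - q) ^ s ≠ 0 := pow_ne_zero _ hqne
    have hCf' : (1 : ℂ) - q ^ s * C ≠ 0 := by rwa [mul_comm]
    have hden1 : ((1 - q) ^ s * qPoch q C s) * ((1 - q) * (1 - q ^ s * C)) ≠ 0 :=
      mul_ne_zero (mul_ne_zero h1q hCs) (mul_ne_zero hqne hCf')
    have hden2 : ((1 : ℂ) - q) ^ (s + 1) * (qPoch q C s * (1 - C * q ^ s)) ≠ 0 :=
      mul_ne_zero (pow_ne_zero _ hqne) (mul_ne_zero hCs hCf)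
    rw [div_mul_div_comm, div_eq_div_iff hden1 hden2]
    ring
end
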